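/- Let p be a prime, q = p, and let μ be the Haar measure on ℤ_p⁵ normalized so that μ(ℤ_p⁵) = 1. Let Ω₁ be the set of (x, y, ỹ₁, ỹ₂, ỹ₃) ∈ (pℤ_p)⁵ such that |x|_p = max(|x|_p, |y|_p, |ỹ₁|_p, |ỹ₂|_p, |ỹ₃|_p). Then for all real numbers ρ, τ > 0, the integral over Ω₁ of |x|_p^{τ+4ρ} dμ equals q^{-5-τ-4ρ}(1 - q^{-1}) / (1 - q^{-5-τ-4ρ}). -/

import Mathlib

open MeasureTheory
open scoped ENNReal

noncomputable instance padicIntMeasurableSpace (p : ℕ) [Fact p.Prime] :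
    MeasurableSpace ℤ_[p] := borel _

instance padicIntBorelSpace (p : ℕ) [Fact p.Prime] : BorelSpace ℤ_[p] := ⟨rfl⟩

/-- The Haar measure on `ℤ_[p]`, normalized so that `ℤ_[p]` itself has measure `1`. -/
noncomputable def padicHaar (p : ℕ) [Fact p.Prime] : Measure ℤ_[p] :=
  Measure.addHaarMeasure ⊤

instance padicHaarProb (p : ℕ) [Fact p.Prime] : IsProbabilityMeasure (padicHaar p) := ⟨by
  simpa [padicHaar] using
    Measure.addHaarMeasure_self (K₀ := (⊤ : TopologicalSpace.PositiveCompacts ℤ_[p]))⟩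

/-- The product Haar measure on `ℤ_p⁵`, with coordinates `(x, y, ỹ₁, ỹ₂, ỹ₃)`, normalized
to total mass `1`. -/
noncomputable def padicHaar5 (p : ℕ) [Fact p.Prime] :
    Measure (ℤ_[p] × ℤ_[p] × ℤ_[p] × ℤ_[p] × ℤ_[p]) :=
  (padicHaar p).prod ((padicHaar p).prod ((padicHaar p).prod
    ((padicHaar p).prod (padicHaar p))))


instance padicHaarInv (p : ℕ) [Fact p.Prime] : (padicHaar p).IsAddLeftInvariant := by
  unfold padicHaar; infer_instance

variable (p : ℕ) [Fact p.Prime]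

lemma ballMeasurable (n : ℕ) : MeasurableSet {x : ℤ_[p] | ‖x‖ ≤ (p:ℝ)^(-(n:ℤ))} :=
  (isClosed_le continuous_norm continuous_const).measurableSet

lemma meas_ball (n : ℕ) :
    padicHaar p {x : ℤ_[p] | ‖x‖ ≤ (p:ℝ)^(-(n:ℤ))} = ((p:ℝ≥0∞)^n)⁻¹ := by
  set B : Set ℤ_[p] := {x : ℤ_[p] | ‖x‖ ≤ (p:ℝ)^(-(n:ℤ))} with hB
  have hBmem : ∀ x : ℤ_[p], x ∈ B ↔ PadicInt.toZModPow n x = 0 := by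
    intro x
    rw [hB, Set.mem_setOf_eq, PadicInt.norm_le_pow_iff_mem_span_pow,
      ← PadicInt.ker_toZModPow, RingHom.mem_ker]
  have hp : NeZero (p ^ n) := ⟨pow_ne_zero _ (Fact.out (p := p.Prime)).ne_zero⟩
  have key : ∀ c : ZMod (p ^ n), ∃ a : ℤ_[p],
      (fun x => -a + x) ⁻¹' B = PadicInt.toZModPow n ⁻¹' {c} := by
    intro c
    set a : ℤ_[p] := ((c.val : ℕ) : ℤ_[p]) with ha
    refine ⟨a, ?_⟩
    have hfa : PadicInt.toZModPow n a = c := by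
      rw [ha, map_natCast, ZMod.natCast_zmod_val]
    have hpre : (fun x => -a + x) ⁻¹' B = PadicInt.toZModPow n ⁻¹' {c} := by
      ext x
      simp only [Set.mem_preimage, Set.mem_singleton_iff, hBmem, map_add, map_neg, hfa,
        neg_add_eq_zero]
      exact eq_comm
    exact hpre
  have hBmeas : MeasurableSet B := ballMeasurable p n
  have hfibmeas : ∀ c : ZMod (p ^ n),
      MeasurableSet (PadicInt.toZModPow n ⁻¹' {c}) := by
    intro c
    obtain ⟨a, ha⟩ := key c
    exact ha ▸ (hBmeas.preimage (measurable_const_add (-a)))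
  have hfibmeasure : ∀ c : ZMod (p ^ n),
      padicHaar p (PadicInt.toZModPow n ⁻¹' {c}) = padicHaar p B := by
    intro c
    obtain ⟨a, ha⟩ := key c
    rw [← ha, measure_preimage_add]
  have huniv : (Set.univ : Set ℤ_[p]) = ⋃ c : ZMod (p ^ n),
      PadicInt.toZModPow n ⁻¹' {c} := by
    ext x; simp
  have hdisj : Pairwise (Function.onFun Disjoint
      fun c : ZMod (p ^ n) => PadicInt.toZModPow n ⁻¹' {c}) := by
    intro c c' hcc
    exact Set.disjoint_left.2 fun x hx hx' => hcc (by
      simp only [Set.mem_preimage, Set.mem_singleton_iff] at hx hx'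
      rw [← hx, ← hx'])
  have h1 : (1 : ℝ≥0∞) = ∑' c : ZMod (p ^ n),
      padicHaar p (PadicInt.toZModPow n ⁻¹' {c}) := by
    rw [← measure_iUnion hdisj hfibmeas, ← huniv, measure_univ]
  have hcard : ((Finset.univ : Finset (ZMod (p ^ n))).card : ℝ≥0∞) = (p : ℝ≥0∞) ^ n := by
    rw [Finset.card_univ, ZMod.card]; push_cast; ring
  rw [tsum_congr hfibmeasure] at h1
  rw [tsum_fintype, Finset.sum_const, nsmul_eq_mul, hcard] at h1
  exact ENNReal.eq_inv_of_mul_eq_one_left (by rw [mul_comm]; exact h1.symm)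

lemma ball_subset (n : ℕ) :
    {x : ℤ_[p] | ‖x‖ ≤ (p:ℝ)^(-((n+1:ℕ):ℤ))} ⊆ {x : ℤ_[p] | ‖x‖ ≤ (p:ℝ)^(-(n:ℤ))} := by
  intro x hx
  have hq : (1:ℝ) < p := by exact_mod_cast (Fact.out (p := p.Prime)).one_lt
  have : ((p:ℝ))^(-((n+1:ℕ):ℤ)) ≤ (p:ℝ)^(-(n:ℤ)) := by
    apply zpow_le_zpow_right₀ (le_of_lt hq)
    push_cast; omega
  exact le_trans hx this

lemma sphere_eq (n : ℕ) :
    {x : ℤ_[p] | ‖x‖ = (p:ℝ)^(-(n:ℤ))} =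
      {x : ℤ_[p] | ‖x‖ ≤ (p:ℝ)^(-(n:ℤ))} \ {x : ℤ_[p] | ‖x‖ ≤ (p:ℝ)^(-((n+1:ℕ):ℤ))} := by
  have hq : (1:ℝ) < p := by exact_mod_cast (Fact.out (p := p.Prime)).one_lt
  have hq0 : (0:ℝ) < p := lt_trans one_pos hq
  ext x
  simp only [Set.mem_setOf_eq, Set.mem_diff, Set.mem_setOf_eq]
  constructor
  · intro h
    refine ⟨le_of_eq h, ?_⟩
    rw [h]
    push_neg
    exact zpow_lt_zpow_right₀ hq (by push_cast; omega)
  · rintro ⟨h1, h2⟩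
    have hx : x ≠ 0 := by
      rintro rfl
      exact h2 (by simpa using le_of_lt (zpow_pos hq0 _))
    rw [PadicInt.norm_le_pow_iff_le_valuation x hx] at h1 h2
    push_neg at h2
    have hv : x.valuation = n := by push_cast at h1 h2 ⊢; omega
    rw [PadicInt.norm_eq_zpow_neg_valuation hx, hv]

lemma meas_sphere (n : ℕ) :
    padicHaar p {x : ℤ_[p] | ‖x‖ = (p:ℝ)^(-(n:ℤ))} =
      ((p:ℝ≥0∞)^n)⁻¹ - ((p:ℝ≥0∞)^(n+1))⁻¹ := by
  rw [sphere_eq, measure_diff (ball_subset p n) ((ballMeasurable p (n+1)).nullMeasurableSet)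
    (measure_ne_top _ _), meas_ball, meas_ball]

lemma meas_zero : padicHaar p ({0} : Set ℤ_[p]) = 0 := by
  have hle : ∀ n : ℕ, padicHaar p ({0} : Set ℤ_[p]) ≤ ((p:ℝ≥0∞)^n)⁻¹ := by
    intro n
    rw [← meas_ball p n]
    apply measure_mono
    intro x hx
    simp only [Set.mem_singleton_iff] at hx
    subst hx
    simp only [Set.mem_setOf_eq, norm_zero]
    positivity
  have htend : Filter.Tendsto (fun n : ℕ => ((p:ℝ≥0∞)^n)⁻¹) Filter.atTop (nhds 0) := by
    simp_rw [ENNReal.inv_pow]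
    exact ENNReal.tendsto_pow_atTop_nhds_zero_of_lt_one
      (ENNReal.inv_lt_one.2 (by exact_mod_cast (Fact.out (p := p.Prime)).one_lt))
  have := ge_of_tendsto' htend (fun n => hle n)
  exact le_antisymm this (zero_le)

instance padicHaar5Prob (p : ℕ) [Fact p.Prime] : IsProbabilityMeasure (padicHaar5 p) := by
  unfold padicHaar5; infer_instance

/-- On the region `Ω₁ ⊆ (pℤ_p)⁵` where `|x|` attains the maximum of the five coordinate
absolute values, `∫_{Ω₁} |x|^{τ+4ρ} dμ = q^{-5-τ-4ρ}(1-q⁻¹)/(1-q^{-5-τ-4ρ})` with `q = p`. -/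
theorem integral_Omega1 (p : ℕ) [Fact p.Prime] (ρ τ : ℝ) (hρ : 0 < ρ) (hτ : 0 < τ) :
    ∫ z in {z : ℤ_[p] × ℤ_[p] × ℤ_[p] × ℤ_[p] × ℤ_[p] |
        ‖z.1‖ < 1 ∧ ‖z.2.1‖ < 1 ∧ ‖z.2.2.1‖ < 1 ∧ ‖z.2.2.2.1‖ < 1 ∧ ‖z.2.2.2.2‖ < 1 ∧
        ‖z.1‖ = max (max (max (max ‖z.1‖ ‖z.2.1‖) ‖z.2.2.1‖) ‖z.2.2.2.1‖) ‖z.2.2.2.2‖},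
        ‖z.1‖ ^ (τ + 4 * ρ) ∂(padicHaar5 p) =
      (p : ℝ) ^ (-5 - τ - 4 * ρ) * (1 - (p : ℝ)⁻¹) / (1 - (p : ℝ) ^ (-5 - τ - 4 * ρ)) := by
  have hq : (1:ℝ) < p := by exact_mod_cast (Fact.out (p := p.Prime)).one_lt
  have hq0 : (0:ℝ) < p := lt_trans one_pos hq
  set q : ℝ := (p : ℝ) with hqdef
  set s : ℝ := τ + 4 * ρ with hsdef
  have hs : 0 < s := by positivity
  set r : ℝ := q ^ (-5 - τ - 4 * ρ) with hrdef
  have hr0 : 0 < r := Real.rpow_pos_of_pos hq0 _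
  have hr1 : r < 1 := Real.rpow_lt_one_of_one_lt_of_neg hq (by linarith)
  set A : ℕ → Set ℤ_[p] := fun k => {x | ‖x‖ = q ^ (-((k+1:ℕ):ℤ))} with hAdef
  set B : ℕ → Set ℤ_[p] := fun k => {x | ‖x‖ ≤ q ^ (-((k+1:ℕ):ℤ))} with hBdef
  set S : ℕ → Set (ℤ_[p] × ℤ_[p] × ℤ_[p] × ℤ_[p] × ℤ_[p]) :=
    fun k => A k ×ˢ B k ×ˢ B k ×ˢ B k ×ˢ B k with hSdef
  set Ω : Set (ℤ_[p] × ℤ_[p] × ℤ_[p] × ℤ_[p] × ℤ_[p]) :=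
    {z | ‖z.1‖ < 1 ∧ ‖z.2.1‖ < 1 ∧ ‖z.2.2.1‖ < 1 ∧ ‖z.2.2.2.1‖ < 1 ∧ ‖z.2.2.2.2‖ < 1 ∧
      ‖z.1‖ = max (max (max (max ‖z.1‖ ‖z.2.1‖) ‖z.2.2.1‖) ‖z.2.2.2.1‖) ‖z.2.2.2.2‖} with hΩdef
  have hAmeas : ∀ k, MeasurableSet (A k) :=
    fun k => (isClosed_eq continuous_norm continuous_const).measurableSet
  have hBmeas : ∀ k, MeasurableSet (B k) := fun k => ballMeasurable p (k+1)
  have hSmeas : ∀ k, MeasurableSet (S k) := fun k =>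
    (hAmeas k).prod ((hBmeas k).prod ((hBmeas k).prod ((hBmeas k).prod (hBmeas k))))
  -- S k ⊆ Ω
  have hSsub : ∀ k, S k ⊆ Ω := by
    intro k z hz
    obtain ⟨h1, h2, h3, h4, h5⟩ := hz
    have hlt1 : q ^ (-((k+1:ℕ):ℤ)) < 1 := by
      have := zpow_lt_one_of_neg₀ hq (by push_cast; omega : -((k+1:ℕ):ℤ) < 0)
      exact this
    have hn1 : ‖z.1‖ = q ^ (-((k+1:ℕ):ℤ)) := h1
    refine ⟨by rw [hn1]; exact hlt1, lt_of_le_of_lt (hn1 ▸ h2) (hn1 ▸ hlt1),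
      lt_of_le_of_lt h3 hlt1, lt_of_le_of_lt h4 hlt1, lt_of_le_of_lt h5 hlt1, ?_⟩
    have e2 : ‖z.2.1‖ ≤ ‖z.1‖ := hn1 ▸ h2
    have e3 : ‖z.2.2.1‖ ≤ ‖z.1‖ := hn1 ▸ h3
    have e4 : ‖z.2.2.2.1‖ ≤ ‖z.1‖ := hn1 ▸ h4
    have e5 : ‖z.2.2.2.2‖ ≤ ‖z.1‖ := hn1 ▸ h5
    simp [max_eq_left, e2, e3, e4, e5]
  -- Ω minus the union is contained in {z.1 = 0}
  have hdiff : Ω \ (⋃ k, S k) ⊆ {z : ℤ_[p] × ℤ_[p] × ℤ_[p] × ℤ_[p] × ℤ_[p] | z.1 = 0} := by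
    rintro z ⟨hzΩ, hzU⟩
    by_contra hz1
    simp only [Set.mem_setOf_eq] at hz1
    obtain ⟨g1, g2, g3, g4, g5, gmax⟩ := hzΩ
    -- the valuation of z.1 is at least 1
    have hval : 1 ≤ z.1.valuation := by
      by_contra hlt
      push_neg at hlt
      have h0 : z.1.valuation = 0 := le_antisymm (by omega) (Nat.zero_le _)
      rw [PadicInt.norm_eq_zpow_neg_valuation hz1, h0] at g1
      simp at g1
    set k : ℕ := ((z.1.valuation : ℤ) - 1).toNat with hk
    have hkv : (k : ℤ) + 1 = z.1.valuation := by omega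
    have hnorm1 : ‖z.1‖ = q ^ (-((k+1:ℕ):ℤ)) := by
      rw [PadicInt.norm_eq_zpow_neg_valuation hz1]
      congr 1
      push_cast
      omega
    have e2 : ‖z.2.1‖ ≤ ‖z.1‖ := gmax ▸ le_trans (le_max_right _ _)
      (le_trans (le_max_left _ _) (le_trans (le_max_left _ _) (le_max_left _ _)))
    have e3 : ‖z.2.2.1‖ ≤ ‖z.1‖ := gmax ▸ le_trans (le_max_right _ _)
      (le_trans (le_max_left _ _) (le_max_left _ _))
    have e4 : ‖z.2.2.2.1‖ ≤ ‖z.1‖ := gmax ▸ le_trans (le_max_right _ _) (le_max_left _ _)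
    have e5 : ‖z.2.2.2.2‖ ≤ ‖z.1‖ := gmax ▸ le_max_right _ _
    refine hzU (Set.mem_iUnion.2 ⟨k, hnorm1, ?_, ?_, ?_, ?_⟩) <;>
      simp only [hBdef, Set.mem_setOf_eq, ← hnorm1] <;> assumption
  -- the set {z.1 = 0} is null
  have hnull : padicHaar5 p {z : ℤ_[p] × ℤ_[p] × ℤ_[p] × ℤ_[p] × ℤ_[p] | z.1 = 0} = 0 := by
    have : {z : ℤ_[p] × ℤ_[p] × ℤ_[p] × ℤ_[p] × ℤ_[p] | z.1 = 0} =
        ({0} : Set ℤ_[p]) ×ˢ (Set.univ : Set (ℤ_[p] × ℤ_[p] × ℤ_[p] × ℤ_[p])) := by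
      ext z
      simp only [Set.mem_setOf_eq, Set.mem_prod, Set.mem_singleton_iff, Set.mem_univ, and_true]
    rw [this, padicHaar5, Measure.prod_prod, meas_zero, zero_mul]
  -- a.e. equality
  have haeq : Ω =ᵐ[padicHaar5 p] ⋃ k, S k := by
    rw [MeasureTheory.ae_eq_set]
    constructor
    · exact measure_mono_null hdiff hnull
    · rw [Set.diff_eq_empty.2 (Set.iUnion_subset hSsub)]
      exact measure_empty
  -- integrability
  have hcont : Continuous (fun z : ℤ_[p] × ℤ_[p] × ℤ_[p] × ℤ_[p] × ℤ_[p] => ‖z.1‖ ^ s) :=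
    (Real.continuous_rpow_const hs.le).comp (continuous_norm.comp continuous_fst)
  have hint : Integrable (fun z : ℤ_[p] × ℤ_[p] × ℤ_[p] × ℤ_[p] × ℤ_[p] => ‖z.1‖ ^ s)
      (padicHaar5 p) := by
    refine (integrable_const (1:ℝ)).mono' hcont.aestronglyMeasurable (ae_of_all _ fun z => ?_)
    rw [Real.norm_eq_abs, abs_of_nonneg (Real.rpow_nonneg (norm_nonneg _) _)]
    exact Real.rpow_le_one (norm_nonneg _) (PadicInt.norm_le_one _) hs.le
  -- pairwise disjointness
  have hSdisj : Pairwise (Function.onFun Disjoint S) := by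
    intro k j hkj
    refine Set.disjoint_left.2 fun z hzk hzj => hkj ?_
    have h1 : ‖z.1‖ = q ^ (-((k+1:ℕ):ℤ)) := hzk.1
    have h2 : ‖z.1‖ = q ^ (-((j+1:ℕ):ℤ)) := hzj.1
    have h3 := zpow_right_injective₀ hq0 (ne_of_gt hq) (h1.symm.trans h2)
    omega
  -- the integral splits as a sum
  have hsplit : ∫ z in Ω, ‖z.1‖ ^ s ∂(padicHaar5 p) =
      ∑' k, ∫ z in S k, ‖z.1‖ ^ s ∂(padicHaar5 p) := by
    rw [setIntegral_congr_set haeq]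
    exact integral_iUnion hSmeas hSdisj hint.integrableOn
  -- per-term value
  have hterm : ∀ k : ℕ, ∫ z in S k, ‖z.1‖ ^ s ∂(padicHaar5 p) = (1 - q⁻¹) * r ^ (k+1) := by
    intro k
    have hconst : ∫ z in S k, ‖z.1‖ ^ s ∂(padicHaar5 p) =
        (padicHaar5 p (S k)).toReal * (q ^ (-((k+1:ℕ):ℤ))) ^ s := by
      rw [setIntegral_congr_fun (hSmeas k)
        (g := fun _ => (q ^ (-((k+1:ℕ):ℤ))) ^ s) (fun z hz => by rw [show ‖z.1‖ = _ from hz.1]),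
        setIntegral_const, smul_eq_mul, measureReal_def]
    have hμ : padicHaar5 p (S k) =
        (((p:ℝ≥0∞)^(k+1))⁻¹ - ((p:ℝ≥0∞)^(k+2))⁻¹) *
          (((p:ℝ≥0∞)^(k+1))⁻¹ * (((p:ℝ≥0∞)^(k+1))⁻¹ *
            (((p:ℝ≥0∞)^(k+1))⁻¹ * ((p:ℝ≥0∞)^(k+1))⁻¹))) := by
      show padicHaar5 p (A k ×ˢ B k ×ˢ B k ×ˢ B k ×ˢ B k) = _
      rw [padicHaar5, Measure.prod_prod, Measure.prod_prod, Measure.prod_prod,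
        Measure.prod_prod]
      have hA : padicHaar p (A k) = ((p:ℝ≥0∞)^(k+1))⁻¹ - ((p:ℝ≥0∞)^(k+1+1))⁻¹ := by
        rw [hAdef]; simp only [hqdef]; exact meas_sphere p (k+1)
      have hBk : padicHaar p (B k) = ((p:ℝ≥0∞)^(k+1))⁻¹ := by
        rw [hBdef]; simp only [hqdef]; exact meas_ball p (k+1)
      rw [hA, hBk]
    have hpne : (p:ℝ≥0∞) ≠ 0 := by
      exact_mod_cast (Fact.out (p := p.Prime)).ne_zero
    have hp1 : (1:ℝ≥0∞) ≤ (p:ℝ≥0∞) := by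
      exact_mod_cast (Fact.out (p := p.Prime)).one_lt.le
    have hle2 : ((p:ℝ≥0∞)^(k+2))⁻¹ ≤ ((p:ℝ≥0∞)^(k+1))⁻¹ :=
      ENNReal.inv_le_inv.2 (pow_le_pow_right' hp1 (by omega))
    have hfin : ((p:ℝ≥0∞)^(k+1))⁻¹ ≠ ⊤ := by
      simp [pow_eq_zero_iff, hpne]
    have hto : (padicHaar5 p (S k)).toReal =
        ((q^(k+1))⁻¹ - (q^(k+2))⁻¹) *
          ((q^(k+1))⁻¹ * ((q^(k+1))⁻¹ * ((q^(k+1))⁻¹ * (q^(k+1))⁻¹))) := by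
      rw [hμ, ENNReal.toReal_mul, ENNReal.toReal_sub_of_le hle2 hfin]
      simp [ENNReal.toReal_inv, hqdef]
    rw [hconst, hto]
    -- algebra
    set Y : ℝ := q ^ (-((k+1:ℕ):ℝ)) with hYdef
    have hY2 : (q^(k+1))⁻¹ = Y := by
      rw [hYdef, Real.rpow_neg hq0.le, Real.rpow_natCast]
    have hY3 : (q^(k+2))⁻¹ = Y * q⁻¹ := by
      rw [show k+2 = (k+1)+1 from rfl, pow_succ, mul_inv, hY2]
    have hzY : q ^ (-((k+1:ℕ):ℤ)) = Y := by
      rw [zpow_neg, zpow_natCast, hY2]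
    have hYs : Y ^ s = q ^ ((-((k+1:ℕ):ℝ)) * s) := by
      rw [Real.rpow_mul hq0.le, hYdef]
    have hY4 : Y * (Y * (Y * Y)) = q ^ ((-((k+1:ℕ):ℝ)) * 4) := by
      rw [Real.rpow_mul hq0.le, ← hYdef, show (4:ℝ) = ((4:ℕ):ℝ) by norm_num,
        Real.rpow_natCast]
      ring
    have hr : r ^ (k+1) = q ^ ((-5 - τ - 4*ρ) * ((k+1:ℕ):ℝ)) := by
      rw [Real.rpow_mul hq0.le, ← hrdef, Real.rpow_natCast]
    rw [hY2, hY3, hzY, hYs, hr]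
    have hfac : Y - Y * q⁻¹ = Y * (1 - q⁻¹) := by ring
    rw [hfac]
    have hcollect : q ^ ((-((k+1:ℕ):ℝ)) * s) * (Y * (Y * (Y * (Y * Y)))) =
        q ^ ((-5 - τ - 4*ρ) * ((k+1:ℕ):ℝ)) := by
      have h5 : Y * (Y * (Y * (Y * Y))) = q ^ ((-((k+1:ℕ):ℝ)) * 5) := by
        rw [Real.rpow_mul hq0.le, ← hYdef, show (5:ℝ) = ((5:ℕ):ℝ) by norm_num,
          Real.rpow_natCast]
        ring
      rw [h5, ← Real.rpow_add hq0]
      congr 1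
      rw [hsdef]; push_cast; ring
    calc (Y * (1 - q⁻¹)) * (Y * (Y * (Y * Y))) * q ^ ((-((k+1:ℕ):ℝ)) * s)
        = (1 - q⁻¹) * (q ^ ((-((k+1:ℕ):ℝ)) * s) * (Y * (Y * (Y * (Y * Y))))) := by ring
      _ = (1 - q⁻¹) * q ^ ((-5 - τ - 4*ρ) * ((k+1:ℕ):ℝ)) := by rw [hcollect]
  rw [hsplit, tsum_congr hterm, tsum_mul_left]
  have hgeom : ∑' k : ℕ, r ^ (k+1) = r * (1 - r)⁻¹ := by
    have h := tsum_geometric_of_lt_one hr0.le hr1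
    calc ∑' k : ℕ, r ^ (k+1) = ∑' k : ℕ, r * r ^ k := by
          apply tsum_congr; intro k; ring
      _ = r * ∑' k : ℕ, r ^ k := tsum_mul_left
      _ = r * (1 - r)⁻¹ := by rw [h]
  rw [hgeom, div_eq_mul_inv]
  ring
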